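/- Let M₂ = P Q Pᵀ ∈ ℝ^{N×N} have rank r with eigendecomposition M₂ = U Σ Uᵀ (Σ positive diagonal r×r) and define H = M₃[U Σ^{-1/2}, U Σ^{-1/2}, U Σ^{-1/2}] where M₃ = ∑_{a=1}^r q_a (P_a ⊗ P_a ⊗ P_a). Then there exists an orthogonal matrix V^H ∈ ℝ^{r×r} with columns v_a^H and scalars λ_a^H = q_a^{-1/2} such that H = ∑_{a=1}^r λ_a^H (v_a^H ⊗ v_a^H ⊗ v_a^H), and moreover P = U Σ^{1/2} V^H Λ^H and Q = (Λ^H)^{-2} with Λ^H = diag(λ_1^H,...,λ_r^H). -/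

import Mathlib

open Matrix

private lemma sum3_rev {α β γ M : Type*} [Fintype α] [Fintype β] [Fintype γ]
    [AddCommMonoid M] (f : α → β → γ → M) :
    ∑ i, ∑ j, ∑ k, f i j k = ∑ k, ∑ j, ∑ i, f i j k :=
  calc ∑ i, ∑ j, ∑ k, f i j k
      = ∑ j, ∑ i, ∑ k, f i j k := Finset.sum_comm
    _ = ∑ j, ∑ k, ∑ i, f i j k := Finset.sum_congr rfl fun _ _ => Finset.sum_comm
    _ = ∑ k, ∑ j, ∑ i, f i j k := Finset.sum_comm

private lemma sum4_comm {α β γ δ M : Type*} [Fintype α] [Fintype β] [Fintype γ] [Fintype δ]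
    [AddCommMonoid M] (f : α → β → γ → δ → M) :
    ∑ i, ∑ j, ∑ k, ∑ t, f i j k t = ∑ t, ∑ i, ∑ j, ∑ k, f i j k t :=
  calc ∑ i, ∑ j, ∑ k, ∑ t, f i j k t
      = ∑ i, ∑ t, ∑ j, ∑ k, f i j k t :=
        Finset.sum_congr rfl fun _ _ =>
          (Finset.sum_congr rfl fun _ _ => Finset.sum_comm).trans Finset.sum_comm
    _ = ∑ t, ∑ i, ∑ j, ∑ k, f i j k t := Finset.sum_comm

private lemma factor3 {N r : ℕ} (P : Matrix (Fin N) (Fin r) ℝ) (q : Fin r → ℝ)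
    (A B C : Fin N → ℝ) :
    (∑ i, ∑ j, ∑ k, (∑ t, q t * P i t * P j t * P k t) * A i * B j * C k)
    = ∑ t, q t * (∑ i, P i t * A i) * (∑ j, P j t * B j) * (∑ k, P k t * C k) := by
  simp only [Finset.sum_mul, Finset.mul_sum]
  rw [sum4_comm]
  refine Finset.sum_congr rfl fun t _ => ?_
  rw [sum3_rev]
  exact Finset.sum_congr rfl fun i _ => Finset.sum_congr rfl fun j _ =>
    Finset.sum_congr rfl fun k _ => by ring

set_option maxHeartbeats 1000000 in
theorem whitened_tensor_decomposition {N r : ℕ}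
    (P : Matrix (Fin N) (Fin r) ℝ) (q : Fin r → ℝ)
    (hq : ∀ a, 0 < q a) (hqsum : ∑ a, q a = 1)
    (hrank : (P * Matrix.diagonal q * Pᵀ).rank = r)
    (U : Matrix (Fin N) (Fin r) ℝ) (σ : Fin r → ℝ)
    (hσ : ∀ a, 0 < σ a) (hU : Uᵀ * U = 1)
    (heig : P * Matrix.diagonal q * Pᵀ = U * Matrix.diagonal σ * Uᵀ)
    (H : Fin r → Fin r → Fin r → ℝ)
    (hH : ∀ a b c, H a b c =
      ∑ i, ∑ j, ∑ k,
        (∑ t, q t * P i t * P j t * P k t)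
          * (U i a * (Real.sqrt (σ a))⁻¹) * (U j b * (Real.sqrt (σ b))⁻¹)
          * (U k c * (Real.sqrt (σ c))⁻¹)) :
    ∃ (V : Matrix (Fin r) (Fin r) ℝ) (lam : Fin r → ℝ),
      Vᵀ * V = 1 ∧ V * Vᵀ = 1 ∧
      (∀ a, lam a = (Real.sqrt (q a))⁻¹) ∧
      (∀ a b c, H a b c = ∑ t, lam t * V a t * V b t * V c t) ∧
      P = U * Matrix.diagonal (fun a => Real.sqrt (σ a)) * V * Matrix.diagonal lam ∧
      Matrix.diagonal q = Matrix.diagonal (fun a => ((lam a) ^ 2)⁻¹) := by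
  have hsq : ∀ a, Real.sqrt (q a) ≠ 0 := fun a => (Real.sqrt_pos.mpr (hq a)).ne'
  have hsσ : ∀ a, Real.sqrt (σ a) ≠ 0 := fun a => (Real.sqrt_pos.mpr (hσ a)).ne'
  have hq2 : ∀ a, Real.sqrt (q a) * Real.sqrt (q a) = q a :=
    fun a => Real.mul_self_sqrt (hq a).le
  have hσ2 : ∀ a, Real.sqrt (σ a) * Real.sqrt (σ a) = σ a :=
    fun a => Real.mul_self_sqrt (hσ a).le
  set S : Matrix (Fin r) (Fin r) ℝ := Matrix.diagonal (fun a => (Real.sqrt (σ a))⁻¹) with hS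
  set Dq' : Matrix (Fin r) (Fin r) ℝ := Matrix.diagonal (fun t => Real.sqrt (q t)) with hDq'
  set V : Matrix (Fin r) (Fin r) ℝ := S * Uᵀ * P * Dq' with hV
  -- key product identity
  have hDqDq : Dq' * Dq' = Matrix.diagonal q := by
    rw [hDq', Matrix.diagonal_mul_diagonal]
    exact congrArg _ (funext fun a => hq2 a)
  have hBBt : (P * Dq') * (P * Dq')ᵀ = U * Matrix.diagonal σ * Uᵀ := by
    rw [transpose_mul, hDq', diagonal_transpose, ← hDq', Matrix.mul_assoc P Dq' _,
      ← Matrix.mul_assoc Dq' Dq' Pᵀ, hDqDq, ← Matrix.mul_assoc, heig]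
  have hSt : Sᵀ = S := by rw [hS]; exact Matrix.diagonal_transpose _
  have hDt : Dq'ᵀ = Dq' := by rw [hDq']; exact Matrix.diagonal_transpose _
  -- orthogonality
  have hVVt : V * Vᵀ = 1 := by
    have expand : V * Vᵀ = S * Uᵀ * ((P * Dq') * (P * Dq')ᵀ) * U * S := by
      rw [hV, transpose_mul, transpose_mul, transpose_mul, hSt, hDt,
        transpose_mul, transpose_transpose]
      simp only [Matrix.mul_assoc]
      rw [hDt]
    rw [expand, hBBt]
    simp only [← Matrix.mul_assoc]
    rw [Matrix.mul_assoc S Uᵀ U, hU, Matrix.mul_one,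
      Matrix.mul_assoc (S * Matrix.diagonal σ) Uᵀ U, hU, Matrix.mul_one,
      hS, Matrix.diagonal_mul_diagonal, Matrix.diagonal_mul_diagonal, ← Matrix.diagonal_one]
    refine congrArg _ (funext fun a => ?_)
    rw [← hσ2 a]
    field_simp
    rw [Real.sqrt_sq (Real.sqrt_nonneg _)]
    exact div_self (pow_ne_zero 2 (hsσ a))
  have hVtV : Vᵀ * V = 1 := mul_eq_one_comm.mp hVVt
  -- entries of V
  have hVentry : ∀ a t, V a t
      = (Real.sqrt (σ a))⁻¹ * (∑ i, U i a * P i t) * Real.sqrt (q t) := by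
    intro a t
    rw [hV, hDq', Matrix.mul_diagonal]
    congr 1
    rw [Matrix.mul_apply, Finset.mul_sum]
    refine Finset.sum_congr rfl fun i _ => ?_
    rw [Matrix.mul_apply]
    rw [hS]
    rw [Fintype.sum_eq_single a fun b hb => by
      simp [Matrix.diagonal_apply_ne _ (Ne.symm hb)]]
    simp [Matrix.diagonal_apply_eq]
    ring
  -- UUᵀ P = P
  have heig' : P * (Matrix.diagonal q * Pᵀ) = U * (Matrix.diagonal σ * Uᵀ) := by
    simpa only [Matrix.mul_assoc] using heig
  have hM' : U * (Uᵀ * (P * (Matrix.diagonal q * Pᵀ))) = P * (Matrix.diagonal q * Pᵀ) := by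
    rw [heig', ← Matrix.mul_assoc Uᵀ U _, hU, Matrix.one_mul]
  have hMr' : P * (Matrix.diagonal q * (Pᵀ * (U * Uᵀ))) = P * (Matrix.diagonal q * Pᵀ) := by
    have h0 : (P * (Matrix.diagonal q * Pᵀ)) * (U * Uᵀ) = P * (Matrix.diagonal q * Pᵀ) := by
      rw [heig']
      simp only [Matrix.mul_assoc]
      rw [← Matrix.mul_assoc Uᵀ U Uᵀ, hU, Matrix.one_mul]
    simpa only [Matrix.mul_assoc] using h0
  have hE : (U * Uᵀ * P - P) * Matrix.diagonal q * (U * Uᵀ * P - P)ᵀ = 0 := by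
    simp only [Matrix.sub_mul, Matrix.mul_sub, Matrix.transpose_sub, Matrix.transpose_mul,
      Matrix.transpose_transpose, Matrix.mul_assoc]
    rw [hMr', hM']
    abel
  have hUUtP : U * Uᵀ * P = P := by
    have hAAt : ((U * Uᵀ * P - P) * Dq') * ((U * Uᵀ * P - P) * Dq')ᴴ = 0 := by
      rw [Matrix.conjTranspose_eq_transpose_of_trivial, transpose_mul, hDq',
        diagonal_transpose, ← hDq', Matrix.mul_assoc _ Dq' _,
        ← Matrix.mul_assoc Dq' Dq' _, hDqDq, ← Matrix.mul_assoc, hE]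
    have hA0 : (U * Uᵀ * P - P) * Dq' = 0 := Matrix.self_mul_conjTranspose_eq_zero.mp hAAt
    have hinv : Dq' * Matrix.diagonal (fun t => (Real.sqrt (q t))⁻¹) = 1 := by
      rw [hDq', Matrix.diagonal_mul_diagonal, ← Matrix.diagonal_one]
      exact congrArg _ (funext fun a => mul_inv_cancel₀ (hsq a))
    have : (U * Uᵀ * P - P) = 0 := by
      calc U * Uᵀ * P - P
          = (U * Uᵀ * P - P) * (Dq' * Matrix.diagonal (fun t => (Real.sqrt (q t))⁻¹)) := by
            rw [hinv, Matrix.mul_one]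
        _ = ((U * Uᵀ * P - P) * Dq') * Matrix.diagonal (fun t => (Real.sqrt (q t))⁻¹) :=
            (Matrix.mul_assoc _ _ _).symm
        _ = 0 := by rw [hA0, Matrix.zero_mul]
    exact sub_eq_zero.mp this
  refine ⟨V, fun t => (Real.sqrt (q t))⁻¹, hVtV, hVVt, fun a => rfl, ?_, ?_, ?_⟩
  · -- tensor decomposition
    intro a b c
    rw [hH a b c, factor3]
    refine Finset.sum_congr rfl fun t _ => ?_
    have hsum : ∀ e : Fin r, (∑ i, P i t * (U i e * (Real.sqrt (σ e))⁻¹))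
        = (Real.sqrt (σ e))⁻¹ * (∑ i, U i e * P i t) := by
      intro e
      rw [Finset.mul_sum]
      exact Finset.sum_congr rfl fun i _ => by ring
    rw [hsum a, hsum b, hsum c, hVentry a t, hVentry b t, hVentry c t]
    generalize (∑ i, U i a * P i t) = xa
    generalize (∑ i, U i b * P i t) = xb
    generalize (∑ i, U i c * P i t) = xc
    rw [← hq2 t]
    field_simp [hsq t]
    rw [Real.sqrt_sq (Real.sqrt_nonneg _)]
    ring
  · -- recovery of P
    have hDD : Matrix.diagonal (fun a => Real.sqrt (σ a)) * S = 1 := by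
      rw [hS, Matrix.diagonal_mul_diagonal, ← Matrix.diagonal_one]
      exact congrArg _ (funext fun a => mul_inv_cancel₀ (hsσ a))
    have hQQ : Dq' * Matrix.diagonal (fun t => (Real.sqrt (q t))⁻¹) = 1 := by
      rw [hDq', Matrix.diagonal_mul_diagonal, ← Matrix.diagonal_one]
      exact congrArg _ (funext fun a => mul_inv_cancel₀ (hsq a))
    rw [hV]
    simp only [← Matrix.mul_assoc]
    rw [Matrix.mul_assoc U (Matrix.diagonal fun a => Real.sqrt (σ a)) S, hDD,
      Matrix.mul_one, Matrix.mul_assoc (U * Uᵀ * P) Dq' _, hQQ, Matrix.mul_one, hUUtP]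
  · -- recovery of Q
    refine congrArg _ (funext fun a => ?_)
    rw [inv_pow, inv_inv, Real.sq_sqrt (hq a).le]
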